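/- Let T ∈ ℕ and let α ∈ Σ² be a periodic point of the Bernoulli shift σ with minimal period T₁ satisfying 2 < T₁ ≤ T (so the period word of α contains both symbols 0 and 1). Let ω₃ be a word of length T₃ with T₃ ≤ T₁ which is the minimal-period word of a periodic sequence whose σ-orbit is disjoint from O(α,σ). Let m > 4T, and let a₁ and a₂ be words of length greater than 4T in each of which every maximal run of consecutive zeros has length at least T (the words are allowed to contain no zeros at all). Let β ∈ Σ² be the periodic sequence obtained by periodic repetition of the word a₁ ω₃ ω₃ … ω₃ a₂, where ω₃ is repeated exactly m times. Then for all integers k and l there exists an integer j with −2T₁ ≤ j ≤ 2T₁ − 1 such that β_{k+j} ≠ α_{l+j}; i.e., the orbit of β does not meet the union over 0 ≤ l < T₁ of the cylinders {ω ∈ Σ² : ω_j = (σ^l α)_j for all −2T₁ ≤ j ≤ 2T₁ − 1}. -/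

import Mathlib

noncomputable section

/-- `shiftZ n ω` is the `n`-th iterate `σⁿ ω` of the Bernoulli shift `(σω)_k = ω_{k+1}`. -/
def shiftZ (n : ℤ) (ω : ℤ → Bool) : ℤ → Bool := fun k => ω (k + n)

/-- The orbit `O(ω,σ) = {σᵏω : k ∈ ℤ}`. -/
def orbitShift (ω : ℤ → Bool) : Set (ℤ → Bool) := Set.range fun n : ℤ => shiftZ n ω

/-- `α` is periodic with minimal period `T`. -/
def IsMinPeriod (T : ℕ) (α : ℤ → Bool) : Prop :=
  0 < T ∧ shiftZ (T : ℤ) α = α ∧ ∀ t : ℕ, 0 < t → t < T → shiftZ (t : ℤ) α ≠ α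

/-- The two-sided sequence obtained by periodic repetition of the word `L`
(`false ↔ 0`, `true ↔ 1`). -/
def periodicOfList (L : List Bool) : ℤ → Bool :=
  fun k => L.getD (k % (L.length : ℤ)).toNat false

/-- In the word `a`, every maximal run of consecutive zeros (`false`) has length at
least `T`.  (A word with no zeros at all satisfies this vacuously.) -/
def RunsOK (T : ℕ) (a : List Bool) : Prop :=
  ∀ i l : ℕ, 0 < l → i + l ≤ a.length →
    (∀ j : ℕ, j < l → a.getD (i + j) false = false) →
    (i = 0 ∨ a.getD (i - 1) false = true) →
    (i + l = a.length ∨ a.getD (i + l) false = true) →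
    T ≤ l

private lemma periodZ (p : ℕ) (f : ℤ → Bool) (h : ∀ x, f (x + (p:ℤ)) = f x) :
    ∀ (k : ℤ) (x : ℤ), f (x + k * p) = f x := by
  intro k
  induction k using Int.induction_on with
  | zero => intro x; simp
  | succ n ih =>
    intro x
    have e : x + ((n:ℤ) + 1) * p = (x + n * p) + p := by ring
    rw [e, h, ih]
  | pred n ih =>
    intro x
    have e : (x + (-(n:ℤ) - 1) * p) + (p:ℤ) = x + (-(n:ℤ)) * p := by ring
    have h2 := h (x + (-(n:ℤ) - 1) * p)
    rw [e] at h2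
    rw [← h2, ih]

private lemma flatten_replicate_length (m : ℕ) (w : List Bool) :
    (List.replicate m w).flatten.length = m * w.length := by
  induction m with
  | zero => simp
  | succ n ih => simp [List.replicate_succ, ih]; ring

private lemma flatten_replicate_getD (w : List Bool) :
    ∀ (m v : ℕ), v < m * w.length →
      (List.replicate m w).flatten.getD v false = w.getD (v % w.length) false := by
  intro m
  induction m with
  | zero => intro v hv; omega
  | succ n ih =>
    intro v hv
    rw [List.replicate_succ, List.flatten_cons]
    by_cases h : v < w.length
    · rw [List.getD_append _ _ _ _ h, Nat.mod_eq_of_lt h]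
    · push_neg at h
      rw [List.getD_append_right _ _ _ _ h, ih (v - w.length) (by
        rw [Nat.succ_mul] at hv; omega)]
      rw [Nat.mod_eq_sub_mod h]

private lemma pattern_exists (T₁ : ℕ) (α : ℤ → Bool) (hper : ∀ x, α (x + (T₁:ℤ)) = α x)
    (hmin : ∀ t : ℕ, 0 < t → t < T₁ → shiftZ (t:ℤ) α ≠ α) (hT₁ : 2 < T₁) :
    ∃ (r : ℕ) (x₀ : ℤ), 1 ≤ r ∧ r < T₁ ∧ α x₀ = true ∧
      (∀ i : ℕ, i < r → α (x₀ + 1 + i) = false) ∧ α (x₀ + 1 + r) = true := by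
  have hconst : ∀ c : Bool, (∀ x, α x = c) → False := by
    intro c hc
    have h1 : shiftZ ((1:ℕ):ℤ) α ≠ α := hmin 1 one_pos (by omega)
    exact h1 (funext fun x => by simp [shiftZ, hc])
  have hu : ∃ u : ℤ, α u = true ∧ α (u + 1) = false := by
    by_contra hno
    push_neg at hno
    by_cases hq : ∃ q : ℤ, α q = true
    · obtain ⟨q, hqt⟩ := hq
      have hall : ∀ n : ℕ, α (q + n) = true := by
        intro n
        induction n with
        | zero => simpa using hqt
        | succ n ih =>
          have := hno (q + n) ih
          have e : q + ((n:ℤ) + 1) = (q + n) + 1 := by ring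
          push_cast
          rw [e]
          revert this
          cases α ((q + n) + 1) <;> simp
      refine hconst true fun x => ?_
      have hk : ∀ k : ℤ, α (x + k * T₁) = α x := fun k => periodZ T₁ α hper k x
      set k : ℤ := ((q - x).natAbs : ℤ)
      have hn : 0 ≤ x + k * T₁ - q := by
        have h1 : (q - x) ≤ ((q - x).natAbs : ℤ) := Int.le_natAbs
        have h2 : (1:ℤ) ≤ T₁ := by exact_mod_cast Nat.one_le_iff_ne_zero.mpr (by omega)
        nlinarith [Int.natCast_nonneg (q - x).natAbs]
      have := hall (x + k * T₁ - q).toNat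
      rw [show q + ((x + k * T₁ - q).toNat : ℤ) = x + k * T₁ from by omega] at this
      rw [hk k] at this
      exact this
    · push_neg at hq
      exact hconst false fun x => by
        have := hq x; revert this; cases α x <;> simp
  obtain ⟨u, hut, huf⟩ := hu
  have hS : α (u + 1 + ((T₁ - 1 : ℕ) : ℤ)) = true := by
    have e : u + 1 + ((T₁ - 1 : ℕ) : ℤ) = u + (T₁:ℤ) := by omega
    rw [e, hper, hut]
  have hex : ∃ n : ℕ, α (u + 1 + n) = true := ⟨T₁ - 1, hS⟩
  classical
  set r := Nat.find hex with hrdef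
  have hrspec : α (u + 1 + (r:ℕ)) = true := Nat.find_spec hex
  have hrle : r ≤ T₁ - 1 := Nat.find_min' hex hS
  have hr1 : 1 ≤ r := by
    rcases Nat.eq_zero_or_pos r with h0 | h; swap; · exact h
    rw [h0] at hrspec
    simp [huf] at hrspec
  refine ⟨r, u, hr1, by omega, hut, ?_, hrspec⟩
  intro i hi
  have := Nat.find_min hex hi
  revert this
  cases h : α (u + 1 + (i:ℤ)) <;> simp [h]

private lemma pattern_window (T₁ : ℕ) (α : ℤ → Bool) (hper : ∀ x, α (x + (T₁:ℤ)) = α x)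
    (hT₁ : 0 < T₁) (r : ℕ) (x₀ : ℤ) (hr : r < T₁)
    (h1 : α x₀ = true) (h2 : ∀ i : ℕ, i < r → α (x₀ + 1 + i) = false)
    (h3 : α (x₀ + 1 + r) = true) (s : ℤ) :
    ∃ x : ℤ, s ≤ x ∧ x + 1 + r ≤ s + 2 * T₁ - 1 ∧ α x = true ∧
      (∀ i : ℕ, i < r → α (x + 1 + i) = false) ∧ α (x + 1 + r) = true := by
  set e : ℤ := (x₀ - s) % (T₁ : ℤ) with hedef
  set k : ℤ := -((x₀ - s) / (T₁:ℤ)) with hkdef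
  have hx : s + e = x₀ + k * T₁ := by
    rw [hedef, hkdef, Int.emod_def]; ring
  have hT₁' : (0:ℤ) < (T₁:ℤ) := by exact_mod_cast hT₁
  have he0 : 0 ≤ e := Int.emod_nonneg _ (by omega)
  have he1 : e < T₁ := Int.emod_lt_of_pos _ hT₁'
  refine ⟨s + e, by omega, by omega, ?_, ?_, ?_⟩
  · rw [hx, periodZ T₁ α hper k x₀, h1]
  · intro i hi
    have e2 : s + e + 1 + (i:ℤ) = (x₀ + 1 + i) + k * T₁ := by linear_combination hx
    rw [e2, periodZ T₁ α hper k (x₀ + 1 + i), h2 i hi]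
  · have e3 : s + e + 1 + (r:ℤ) = (x₀ + 1 + r) + k * T₁ := by linear_combination hx
    rw [e3, periodZ T₁ α hper k (x₀ + 1 + r), h3]

private lemma eq_of_agree (T₁ T₃ : ℕ) (hT₁ : 0 < T₁) (hT₃ : 0 < T₃)
    (α ω : ℤ → Bool) (hpα : ∀ x, α (x + (T₁:ℤ)) = α x) (hpω : ∀ x, ω (x + (T₃:ℤ)) = ω x)
    (t' c' : ℤ) (h : ∀ u : ℤ, 0 ≤ u → u < (T₁:ℤ) + T₃ → α (t' + u) = ω (c' + u)) :
    ∀ x : ℤ, α (t' + x) = ω (c' + x) := by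
  set g : ℤ → Bool := fun z => α (t' + z) with hg
  set w : ℤ → Bool := fun z => ω (c' + z) with hw
  have hwper : ∀ z, w (z + (T₃:ℤ)) = w z := by
    intro z
    have := hpω (c' + z)
    simp only [hw]
    rw [show c' + (z + (T₃:ℤ)) = (c' + z) + T₃ from by ring, this]
  have hgper : ∀ z, g (z + (T₃:ℤ)) = g z := by
    intro z
    have hT₁' : (0:ℤ) < (T₁:ℤ) := by exact_mod_cast hT₁
    set z' : ℤ := z % (T₁:ℤ) with hz'
    have hz0 : 0 ≤ z' := Int.emod_nonneg _ (by omega)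
    have hz1 : z' < T₁ := Int.emod_lt_of_pos _ hT₁'
    set q : ℤ := z / (T₁:ℤ) with hq
    have hzq : z = z' + q * T₁ := by rw [hz', hq, Int.emod_def]; ring
    have hT₃' : (0:ℤ) ≤ (T₃:ℤ) := by positivity
    have hgα : ∀ v : ℤ, g (v + q * T₁) = g v := by
      intro v
      have : α ((t' + v) + q * T₁) = α (t' + v) := periodZ T₁ α hpα q (t' + v)
      simp only [hg]
      rw [show t' + (v + q * T₁) = (t' + v) + q * T₁ from by ring, this]
    calc g (z + (T₃:ℤ)) = g ((z' + T₃) + q * T₁) := by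
          rw [show z + (T₃:ℤ) = (z' + T₃) + q * T₁ from by linear_combination hzq]
      _ = g (z' + T₃) := hgα _
      _ = w (z' + T₃) := h (z' + T₃) (by omega) (by omega)
      _ = w z' := hwper z'
      _ = g z' := (h z' (by omega) (by omega)).symm
      _ = g (z' + q * T₁) := (hgα z').symm
      _ = g z := by rw [← hzq]
  intro x
  have hT₃' : (0:ℤ) < (T₃:ℤ) := by exact_mod_cast hT₃
  set x'' : ℤ := x % (T₃:ℤ) with hx''
  have h0 : 0 ≤ x'' := Int.emod_nonneg _ (by omega)
  have h1 : x'' < T₃ := Int.emod_lt_of_pos _ hT₃'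
  set q : ℤ := x / (T₃:ℤ) with hq
  have hxq : x = x'' + q * T₃ := by rw [hx'', hq, Int.emod_def]; ring
  calc g x = g (x'' + q * T₃) := by rw [← hxq]
    _ = g x'' := periodZ T₃ g hgper q x''
    _ = w x'' := h x'' h0 (by omega)
    _ = w (x'' + q * T₃) := (periodZ T₃ w hwper q x'').symm
    _ = w x := by rw [← hxq]

/-- Lemma 5: let `α` be periodic with minimal period `T₁`, `2 < T₁ ≤ T`, and let `ω₃` be
the minimal-period word of a periodic sequence whose orbit is disjoint from `O(α,σ)`,
with `|ω₃| = T₃ ≤ T₁`.  If `β` is the periodic repetition of `a₁ ω₃ᵐ a₂` with `m > 4T`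
and `a₁, a₂` words of length `> 4T` in which every maximal run of zeros has length
`≥ T`, then no stretch of `β` of length `4T₁` agrees with a stretch of `α`. -/
theorem avoid_cylinders_of_periodic_word
    (T : ℕ) (α : ℤ → Bool) (T₁ : ℕ) (hα : IsMinPeriod T₁ α)
    (hT₁ : 2 < T₁) (hT₁T : T₁ ≤ T)
    (ω₃ : List Bool) (T₃ : ℕ) (hlen : ω₃.length = T₃) (hT₃ : T₃ ≤ T₁)
    (hmin : IsMinPeriod T₃ (periodicOfList ω₃))
    (hdisj : Disjoint (orbitShift α) (orbitShift (periodicOfList ω₃)))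
    (m : ℕ) (hm : 4 * T < m)
    (a₁ a₂ : List Bool) (ha₁ : 4 * T < a₁.length) (ha₂ : 4 * T < a₂.length)
    (hr₁ : RunsOK T a₁) (hr₂ : RunsOK T a₂)
    (β : ℤ → Bool)
    (hβ : β = periodicOfList (a₁ ++ (List.replicate m ω₃).flatten ++ a₂)) :
    ∀ k l : ℤ, ∃ j : ℤ, -2 * (T₁ : ℤ) ≤ j ∧ j ≤ 2 * (T₁ : ℤ) - 1 ∧
      β (k + j) ≠ α (l + j) := by
  intro k l
  by_contra hcon
  push_neg at hcon
  classical
  have hT₁pos : 0 < T₁ := by omega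
  have hT₃pos : 0 < T₃ := hmin.1
  have hpα : ∀ x, α (x + (T₁:ℤ)) = α x := fun x => congrFun hα.2.1 x
  have hpω : ∀ x, periodicOfList ω₃ (x + (T₃:ℤ)) = periodicOfList ω₃ x :=
    fun x => congrFun hmin.2.1 x
  obtain ⟨r, x₀, hr1, hrT₁, hp1, hp2, hp3⟩ := pattern_exists T₁ α hpα hα.2.2 hT₁
  set F := (List.replicate m ω₃).flatten with hF
  set L := a₁ ++ F ++ a₂ with hLdef
  obtain ⟨P, hP⟩ : ∃ P : ℕ, m * T₃ = P := ⟨_, rfl⟩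
  have hFlen : F.length = P := by rw [hF, flatten_replicate_length, hlen, hP]
  have hP4 : 4 * T < P := by
    calc 4 * T < m := hm
      _ ≤ m * T₃ := Nat.le_mul_of_pos_right m hT₃pos
      _ = P := hP
  have hLlen : L.length = a₁.length + P + a₂.length := by
    rw [hLdef, List.length_append, List.length_append, hFlen]
  set n₁ : ℤ := (a₁.length : ℤ) with hn₁
  set n₂ : ℤ := n₁ + (P : ℤ) with hn₂
  set N : ℤ := (L.length : ℤ) with hNdef
  have hNeq : N = n₁ + (P:ℤ) + (a₂.length : ℤ) := by
    rw [hNdef, hLlen]; push_cast; ring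
  have hNpos : (0:ℤ) < N := by omega
  have hβval : ∀ z : ℤ, β z = L.getD (z % N).toNat false := by
    intro z; rw [hβ, hNdef]; rfl
  have hβcong : ∀ z z' : ℤ, z % N = z' % N → β z = β z' := fun z z' h => by
    rw [hβval, hβval, h]
  have hmodid : ∀ z : ℤ, 0 ≤ z → z < N → z % N = z := fun z h1 h2 =>
    Int.emod_eq_of_lt h1 h2
  have lemA1 : ∀ z : ℤ, 0 ≤ z → z < n₁ → β z = a₁.getD z.toNat false := by
    intro z h0 h1
    rw [hβval, hmodid z h0 (by omega), hLdef]
    rw [List.getD_append _ _ _ _ (show z.toNat < (a₁ ++ F).length from by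
      rw [List.length_append, hFlen]; omega)]
    rw [List.getD_append _ _ _ _ (show z.toNat < a₁.length from by omega)]
  have lemM : ∀ z : ℤ, n₁ ≤ z → z < n₂ → β z = periodicOfList ω₃ (z - n₁) := by
    intro z h0 h1
    rw [hβval, hmodid z (by omega) (by omega), hLdef]
    rw [List.getD_append _ _ _ _ (show z.toNat < (a₁ ++ F).length from by
      rw [List.length_append, hFlen]; omega)]
    rw [List.getD_append_right _ _ _ _ (show a₁.length ≤ z.toNat from by omega)]
    rw [show z.toNat - a₁.length = (z - n₁).toNat from by omega]
    rw [hF, flatten_replicate_getD ω₃ m _ (show (z - n₁).toNat < m * ω₃.length from by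
      rw [hlen, hP]; omega)]
    simp only [periodicOfList]
    congr 1
    rw [show z - n₁ = (((z - n₁).toNat : ℕ) : ℤ) from by omega]
    rw [← Int.natCast_mod, Int.toNat_natCast, Int.toNat_natCast]
  have lemA2 : ∀ z : ℤ, n₂ ≤ z → z < N → β z = a₂.getD (z - n₂).toNat false := by
    intro z h0 h1
    rw [hβval, hmodid z (by omega) h1, hLdef]
    rw [List.getD_append_right _ _ _ _ (show (a₁ ++ F).length ≤ z.toNat from by
      rw [List.length_append, hFlen]; omega)]
    congr 1
    rw [List.length_append, hFlen]
    omega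
  have lemA1' : ∀ z : ℤ, N ≤ z → z < N + n₁ → β z = a₁.getD (z - N).toNat false := by
    intro z h0 h1
    have hc : β z = β (z - N) := hβcong z (z - N) (Int.sub_emod_right z N).symm
    rw [hc, lemA1 (z - N) (by omega) (by omega)]
  set t : ℤ := l - 2 * (T₁:ℤ) with ht
  set y : ℤ := (k - 2 * (T₁:ℤ)) % N with hy
  have hy0 : 0 ≤ y := Int.emod_nonneg _ (by omega)
  have hyN : y < N := Int.emod_lt_of_pos _ hNpos
  have H : ∀ u : ℤ, 0 ≤ u → u < 4 * (T₁:ℤ) → β (y + u) = α (t + u) := by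
    intro u h0 h4
    have hcg : (y + u) % N = ((k - 2 * (T₁:ℤ)) + u) % N := by
      rw [hy]; exact Int.emod_add_emod (k - 2 * (T₁:ℤ)) N u
    rw [hβcong (y + u) (k - 2 * (T₁:ℤ) + u) hcg]
    have h2 := hcon (u - 2 * (T₁:ℤ)) (by omega) (by omega)
    rw [show k - 2 * (T₁:ℤ) + u = k + (u - 2 * T₁) from by ring,
      show t + u = l + (u - 2 * (T₁:ℤ)) from by rw [ht]; ring]
    exact h2
  have caseA : ∀ c : ℤ, y ≤ c → c + 2 * (T₁:ℤ) ≤ y + 4 * T₁ → n₁ ≤ c →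
      c + 2 * (T₁:ℤ) ≤ n₂ → False := by
    intro c h1 h2 h3 h4
    have hag : ∀ u : ℤ, 0 ≤ u → u < (T₁:ℤ) + T₃ →
        α ((t + c - y) + u) = periodicOfList ω₃ ((c - n₁) + u) := by
      intro u h0 hu
      have hH := H (c - y + u) (by omega) (by omega)
      rw [show y + (c - y + u) = c + u from by ring] at hH
      rw [lemM (c + u) (by omega) (by omega)] at hH
      rw [show t + (c - y + u) = (t + c - y) + u from by ring] at hH
      rw [show c + u - n₁ = (c - n₁) + u from by ring] at hH
      exact hH.symm
    have hall := eq_of_agree T₁ T₃ hT₁pos hT₃pos α (periodicOfList ω₃) hpα hpω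
      (t + c - y) (c - n₁) hag
    have heq : shiftZ (t + c - y) α = shiftZ (c - n₁) (periodicOfList ω₃) := by
      funext x
      have := hall x
      simpa [shiftZ, add_comm] using this
    exact (Set.disjoint_left.mp hdisj ⟨t + c - y, rfl⟩) ⟨c - n₁, heq.symm⟩
  have caseB : ∀ a : List Bool, RunsOK T a → ∀ c d : ℤ, y ≤ c →
      c + 2 * (T₁:ℤ) ≤ y + 4 * T₁ →
      (∀ x : ℤ, c ≤ x → x < c + 2 * (T₁:ℤ) → β x = a.getD (x - d).toNat false) →
      d ≤ c → c + 2 * (T₁:ℤ) ≤ d + a.length → False := by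
    intro a hra c d h1 h2 hval hd1 hd2
    obtain ⟨x', hx1, hx2, hq1, hq2, hq3⟩ :=
      pattern_window T₁ α hpα hT₁pos r x₀ hrT₁ hp1 hp2 hp3 (c + t - y)
    set p : ℤ := x' - t + y with hpdef
    have key : ∀ x : ℤ, c ≤ x → x < c + 2 * (T₁:ℤ) →
        a.getD (x - d).toNat false = α (x + t - y) := by
      intro x hx hx'
      have hH := H (x - y) (by omega) (by omega)
      rw [show y + (x - y) = x from by ring] at hH
      rw [hval x hx hx'] at hH
      rw [show t + (x - y) = x + t - y from by ring] at hH
      exact hH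
    have hpb1 : c ≤ p := by omega
    have hpb2 : p + 1 + (r:ℤ) ≤ c + 2 * T₁ - 1 := by omega
    have e1 : a.getD (p - d).toNat false = true := by
      rw [key p hpb1 (by omega), show p + t - y = x' from by rw [hpdef]; ring]
      exact hq1
    have e2 : ∀ j : ℕ, j < r → a.getD ((p - d).toNat + 1 + j) false = false := by
      intro j hj
      have hjr : (j:ℤ) < r := by exact_mod_cast hj
      have hk := key (p + 1 + j) (by omega) (by omega)
      rw [show p + 1 + (j:ℤ) - d = (p - d) + (1 + j) from by ring] at hk
      rw [show ((p - d) + (1 + (j:ℤ))).toNat = (p - d).toNat + 1 + j from by omega] at hk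
      rw [hk, show p + 1 + (j:ℤ) + t - y = x' + 1 + j from by rw [hpdef]; ring]
      exact hq2 j hj
    have e3 : a.getD ((p - d).toNat + 1 + r) false = true := by
      have hk := key (p + 1 + r) (by omega) (by omega)
      rw [show p + 1 + (r:ℤ) - d = (p - d) + (1 + r) from by ring] at hk
      rw [show ((p - d) + (1 + (r:ℤ))).toNat = (p - d).toNat + 1 + r from by omega] at hk
      rw [hk, show p + 1 + (r:ℤ) + t - y = x' + 1 + r from by rw [hpdef]; ring]
      exact hq3
    have hT := hra ((p - d).toNat + 1) r (by omega) (by omega)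
      (fun j hj => e2 j hj)
      (Or.inr (by rw [show (p - d).toNat + 1 - 1 = (p - d).toNat from by omega]; exact e1))
      (Or.inr e3)
    omega
  rcases le_or_gt (y + 4 * (T₁:ℤ)) n₁ with hc1 | hc1
  · exact caseB a₁ hr₁ y 0 le_rfl (by omega)
      (fun x hx hx' => by rw [lemA1 x (by omega) (by omega)]; norm_num)
      (by omega) (by omega)
  rcases lt_or_ge y n₁ with hc2 | hc2
  · rcases le_or_gt (2 * (T₁:ℤ)) (n₁ - y) with hc3 | hc3
    · exact caseB a₁ hr₁ (n₁ - 2 * T₁) 0 (by omega) (by omega)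
        (fun x hx hx' => by rw [lemA1 x (by omega) (by omega)]; norm_num)
        (by omega) (by omega)
    · exact caseA n₁ (by omega) (by omega) le_rfl (by omega)
  rcases le_or_gt (y + 4 * (T₁:ℤ)) n₂ with hc4 | hc4
  · exact caseA y le_rfl (by omega) (by omega) (by omega)
  rcases lt_or_ge y n₂ with hc5 | hc5
  · rcases le_or_gt (2 * (T₁:ℤ)) (n₂ - y) with hc6 | hc6
    · exact caseA (n₂ - 2 * T₁) (by omega) (by omega) (by omega) (by omega)
    · exact caseB a₂ hr₂ n₂ n₂ (by omega) (by omega)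
        (fun x hx hx' => lemA2 x (by omega) (by omega)) le_rfl (by omega)
  rcases le_or_gt (y + 4 * (T₁:ℤ)) N with hc7 | hc7
  · exact caseB a₂ hr₂ y n₂ le_rfl (by omega)
      (fun x hx hx' => lemA2 x (by omega) (by omega)) hc5 (by omega)
  rcases le_or_gt (2 * (T₁:ℤ)) (N - y) with hc8 | hc8
  · exact caseB a₂ hr₂ (N - 2 * T₁) n₂ (by omega) (by omega)
      (fun x hx hx' => lemA2 x (by omega) (by omega)) (by omega) (by omega)
  · exact caseB a₁ hr₁ N N (by omega) (by omega)
      (fun x hx hx' => lemA1' x (by omega) (by omega)) (by omega) (by omega)
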